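/- Policy gradient theorem for directional derivatives: for any policies π, π' (viewed as vectors in ℝ^{|S|·|A|}), ⟨∇J(π), π' - π⟩ = Σ_{s} Σ_{a} η_π(s) Q_π(s,a) (π'(s,a) - π(s,a)). -/

import Mathlib

set_option linter.unusedSectionVars false

open Finset Matrix

noncomputable section PGAux

attribute [local instance] Matrix.linftyOpNormedRing Matrix.linftyOpNormedAlgebra

variable {S A : Type} [Fintype S] [Fintype A] [DecidableEq S]

instance pgCompleteSpace : CompleteSpace (Matrix S S ℝ) :=
  inferInstanceAs (CompleteSpace (S → S → ℝ))

def pgPmat (P : S → A → S → ℝ) : (S → A → ℝ) →ₗ[ℝ] Matrix S S ℝ where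
  toFun p := Matrix.of fun s₁ s₂ => ∑ a, p s₁ a * P s₁ a s₂
  map_add' p q := by
    ext s₁ s₂
    simp [add_mul, Finset.sum_add_distrib]
  map_smul' c p := by
    ext s₁ s₂
    simp [Finset.mul_sum, mul_assoc]

def pgRvec (r : S → A → ℝ) : (S → A → ℝ) →ₗ[ℝ] (S → ℝ) where
  toFun p s := ∑ a, p s a * r s a
  map_add' p q := by ext s; simp [add_mul, Finset.sum_add_distrib]
  map_smul' c p := by ext s; simp [Finset.mul_sum, mul_assoc]

def pgBL (γ : ℝ) (ρ : S → ℝ) : Matrix S S ℝ →ₗ[ℝ] ((S → ℝ) →L[ℝ] ℝ) where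
  toFun M := LinearMap.toContinuousLinearMap
    { toFun := fun v => (1 - γ) * ∑ s, ρ s * (M *ᵥ v) s
      map_add' := fun v w => by
        simp [Matrix.mulVec_add, mul_add, Finset.sum_add_distrib]
      map_smul' := fun c v => by
        simp [Matrix.mulVec_smul, Finset.mul_sum, mul_assoc, mul_left_comm] }
  map_add' M N := by
    ext v
    simp [Matrix.add_mulVec, mul_add, Finset.sum_add_distrib]
  map_smul' c M := by
    ext v
    simp [Matrix.smul_mulVec, Finset.mul_sum, mul_assoc, mul_left_comm]

def pgB (γ : ℝ) (ρ : S → ℝ) : Matrix S S ℝ →L[ℝ] ((S → ℝ) →L[ℝ] ℝ) :=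
  (pgBL γ ρ).toContinuousLinearMap

@[simp] lemma pgB_apply (γ : ℝ) (ρ : S → ℝ) (M : Matrix S S ℝ) (v : S → ℝ) :
    pgB γ ρ M v = (1 - γ) * ∑ s, ρ s * (M *ᵥ v) s := rfl

def pgL (ρ : S → ℝ) (s : S) : Matrix S S ℝ →L[ℝ] ℝ :=
  LinearMap.toContinuousLinearMap
    { toFun := fun M => (ρ ᵥ* M) s
      map_add' := fun M N => by
        simp [Matrix.vecMul, dotProduct, mul_add, Finset.sum_add_distrib]
      map_smul' := fun c M => by
        simp [Matrix.vecMul, dotProduct, Finset.mul_sum, mul_assoc, mul_left_comm] }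

@[simp] lemma pgL_apply (ρ : S → ℝ) (s : S) (M : Matrix S S ℝ) :
    pgL ρ s M = (ρ ᵥ* M) s := rfl

end PGAux

attribute [local instance] Matrix.linftyOpNormedRing Matrix.linftyOpNormedAlgebra

/-- Policy gradient theorem for directional derivatives:
⟨∇J(π), π' - π⟩ = Σ_s Σ_a η_π(s) Q_π(s,a) (π'(s,a) - π(s,a)). -/
theorem policy_gradient_theorem
    {S A : Type} [Fintype S] [Fintype A] [DecidableEq S] [Nonempty S] [Nonempty A]
    (r : S → A → ℝ) (P : S → A → S → ℝ)
    (hP : ∀ s a, P s a ∈ stdSimplex ℝ S)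
    (γ : ℝ) (hγ : γ ∈ Set.Ioo (0 : ℝ) 1)
    (ρ : S → ℝ) (hρ : ρ ∈ stdSimplex ℝ S)
    -- J(p) = (1-γ) ρᵀ V_p with V_p = (I - γ P_p)⁻¹ r_p
    (J : (S → A → ℝ) → ℝ)
    (hJ : ∀ p : S → A → ℝ, J p = (1 - γ) * ∑ s, ρ s *
      (((1 - γ • Matrix.of fun s₁ s₂ => ∑ a, p s₁ a * P s₁ a s₂)⁻¹
        *ᵥ fun s₁ => ∑ a, p s₁ a * r s₁ a) s))
    (π : S → A → ℝ) (hπ : ∀ s, π s ∈ stdSimplex ℝ A)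
    (V : S → ℝ)
    (hV : ∀ s, V s = (∑ a, π s a * r s a) + γ * ∑ s', (∑ a, π s a * P s a s') * V s')
    (Q : S → A → ℝ) (hQ : ∀ s a, Q s a = r s a + γ * ∑ s', P s a s' * V s')
    (η : S → ℝ)
    (hη : ∀ s, η s = (1 - γ) *
      ∑' t : ℕ, γ ^ t * ((ρ ᵥ* (Matrix.of fun s₁ s₂ => ∑ a, π s₁ a * P s₁ a s₂) ^ t) s)) :
    ∃ D : (S → A → ℝ) →L[ℝ] ℝ, HasFDerivAt J D π ∧
      ∀ π' : S → A → ℝ, (∀ s, π' s ∈ stdSimplex ℝ A) →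
        D (π' - π) = ∑ s, ∑ a, η s * Q s a * (π' s a - π s a) := by
  obtain ⟨hγ0, hγ1⟩ := hγ
  classical
  set Pc : (S → A → ℝ) →L[ℝ] Matrix S S ℝ := (pgPmat P).toContinuousLinearMap with hPcdef
  set Rc : (S → A → ℝ) →L[ℝ] (S → ℝ) := (pgRvec r).toContinuousLinearMap with hRcdef
  have hPc : ∀ (p : S → A → ℝ) s₁ s₂, Pc p s₁ s₂ = ∑ a, p s₁ a * P s₁ a s₂ := fun _ _ _ => rfl
  have hRc : ∀ (p : S → A → ℝ) s, Rc p s = ∑ a, p s a * r s a := fun _ _ => rfl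
  -- the policy matrix
  have hnn : ∀ i j, 0 ≤ Pc π i j := fun i j =>
    Finset.sum_nonneg fun a _ => mul_nonneg ((hπ i).1 a) ((hP i a).1 j)
  have hrow : ∀ i, ∑ j, Pc π i j = 1 := by
    intro i
    calc ∑ j, Pc π i j = ∑ j, ∑ a, π i a * P i a j := rfl
      _ = ∑ a, ∑ j, π i a * P i a j := Finset.sum_comm
      _ = ∑ a, π i a * ∑ j, P i a j := by simp [Finset.mul_sum]
      _ = ∑ a, π i a := by
          refine Finset.sum_congr rfl fun a _ => ?_
          rw [(hP i a).2, mul_one]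
      _ = 1 := (hπ i).2
  have hPn : ‖Pc π‖ ≤ 1 := by
    rw [Matrix.linfty_opNorm_def]
    have h1 : ∀ i : S, (∑ j, ‖Pc π i j‖₊) ≤ (1 : NNReal) := by
      intro i
      rw [← NNReal.coe_le_coe]
      push_cast
      calc ∑ j, ‖Pc π i j‖ = ∑ j, Pc π i j :=
            Finset.sum_congr rfl fun j _ => Real.norm_of_nonneg (hnn i j)
        _ = 1 := hrow i
        _ ≤ 1 := le_rfl
    exact_mod_cast (Finset.sup_le fun i _ => h1 i :
      (Finset.univ.sup fun i : S => ∑ j, ‖Pc π i j‖₊) ≤ (1 : NNReal))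
  have hx : ‖γ • Pc π‖ < 1 := by
    rw [norm_smul, Real.norm_eq_abs, abs_of_pos hγ0]
    calc γ * ‖Pc π‖ ≤ γ * 1 := mul_le_mul_of_nonneg_left hPn hγ0.le
      _ < 1 := by linarith
  set uM : (Matrix S S ℝ)ˣ := Units.oneSub (γ • Pc π) hx with huMdef
  set Minv : Matrix S S ℝ := ↑uM⁻¹ with hMinvdef
  -- derivative machinery
  have hg : HasFDerivAt (fun p => (1 : Matrix S S ℝ) - γ • Pc p) (-(γ • Pc)) π := by
    exact ((hasFDerivAt_const (1 : Matrix S S ℝ) π).sub ((Pc.hasFDerivAt).const_smul γ)).congr_fderiv (zero_sub _)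
  have hinv : HasFDerivAt (fun p => Ring.inverse ((1 : Matrix S S ℝ) - γ • Pc p))
      ((-(ContinuousLinearMap.mulLeftRight ℝ _ Minv Minv)).comp (-(γ • Pc))) π :=
    HasFDerivAt.comp (g := Ring.inverse) π (hasFDerivAt_ringInverse (𝕜 := ℝ) uM) hg
  have hc : HasFDerivAt (fun p => pgB γ ρ (Ring.inverse ((1 : Matrix S S ℝ) - γ • Pc p)))
      ((pgB γ ρ).comp ((-(ContinuousLinearMap.mulLeftRight ℝ _ Minv Minv)).comp (-(γ • Pc)))) π :=
    (pgB γ ρ).hasFDerivAt.comp π hinv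
  have hD := hc.clm_apply Rc.hasFDerivAt
  have hJfun : J = fun p => pgB γ ρ (Ring.inverse ((1 : Matrix S S ℝ) - γ • Pc p)) (Rc p) := by
    funext p
    rw [hJ p, Matrix.nonsing_inv_eq_ringInverse]
    rfl
  refine ⟨_, by rw [hJfun]; exact hD, ?_⟩
  intro π' _
  -- value function identity
  have hRI : Ring.inverse ((1 : Matrix S S ℝ) - γ • Pc π) = Minv := Ring.inverse_unit uM
  have hMV : ((1 : Matrix S S ℝ) - γ • Pc π) *ᵥ V = Rc π := by
    funext s
    have h1 : (((1 : Matrix S S ℝ) - γ • Pc π) *ᵥ V) s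
        = V s - γ * ∑ s', Pc π s s' * V s' := by
      rw [Matrix.sub_mulVec, Matrix.smul_mulVec, Matrix.one_mulVec]
      simp [Matrix.mulVec, dotProduct]
    rw [h1, hRc]
    have h2 : ∑ s', Pc π s s' * V s' = ∑ s', (∑ a, π s a * P s a s') * V s' := rfl
    rw [h2]
    have := hV s
    linarith
  have hVeq : Minv *ᵥ Rc π = V := by
    rw [← hMV, Matrix.mulVec_mulVec]
    have : Minv * ((1 : Matrix S S ℝ) - γ • Pc π) = 1 := uM.inv_mul
    rw [this, Matrix.one_mulVec]
  -- occupancy measure identity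
  have hgeom : Summable (fun t : ℕ => (γ • Pc π) ^ t) := summable_geometric_of_norm_lt_one hx
  have hηinv : ∀ s, η s = (1 - γ) * (ρ ᵥ* Minv) s := by
    intro s
    rw [hη s]
    congr 1
    have h1 : ∀ t : ℕ, γ ^ t * ((ρ ᵥ* (Matrix.of fun s₁ s₂ => ∑ a, π s₁ a * P s₁ a s₂) ^ t) s)
        = pgL ρ s ((γ • Pc π) ^ t) := by
      intro t
      rw [smul_pow, pgL_apply]
      have h2 : (Matrix.of fun s₁ s₂ => ∑ a, π s₁ a * P s₁ a s₂) = Pc π := rfl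
      rw [h2]
      simp [Matrix.vecMul, dotProduct, Finset.mul_sum, mul_assoc, mul_left_comm]
    rw [tsum_congr h1, ← ContinuousLinearMap.map_tsum _ hgeom]
    have h3 : (∑' t : ℕ, (γ • Pc π) ^ t) = Minv := by
      refine (geom_series_eq_inverse _ hx).trans ?_
      exact hRI
    rw [h3, pgL_apply]
  -- now compute the directional derivative
  set W : S → ℝ := fun j => ∑ a, (π' j a - π j a) * Q j a with hWdef
  have hW : Rc (π' - π) + γ • (Pc (π' - π) *ᵥ V) = W := by
    funext j
    simp only [Pi.add_apply, Pi.smul_apply, smul_eq_mul, hWdef]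
    rw [hRc]
    have h4 : (Pc (π' - π) *ᵥ V) j = ∑ s', (∑ a, (π' j a - π j a) * P j a s') * V s' := by
      simp [Matrix.mulVec, dotProduct, hPc, Pi.sub_apply]
    rw [h4]
    simp only [Pi.sub_apply, hQ, mul_add, Finset.sum_add_distrib]
    congr 1
    simp only [Finset.sum_mul, Finset.mul_sum]
    rw [Finset.sum_comm]
    exact Finset.sum_congr rfl fun a _ => Finset.sum_congr rfl fun s' _ => by ring
  -- evaluate the derivative term
  have hcomp : ((pgB γ ρ).comp ((-(ContinuousLinearMap.mulLeftRight ℝ _ Minv Minv)).comp (-(γ • Pc)))) (π' - π) = pgB γ ρ (Minv * γ • Pc (π' - π) * Minv) := by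
    show pgB γ ρ ((-(ContinuousLinearMap.mulLeftRight ℝ _ Minv Minv)) ((-(γ • Pc)) (π' - π))) = _
    simp only [ContinuousLinearMap.neg_apply, ContinuousLinearMap.smul_apply,
      ContinuousLinearMap.mulLeftRight_apply, mul_neg, neg_mul, neg_neg]
  simp only [ContinuousLinearMap.add_apply, ContinuousLinearMap.coe_comp', Function.comp_apply,
    ContinuousLinearMap.flip_apply, ContinuousLinearMap.neg_apply, neg_neg, map_neg,
    ContinuousLinearMap.smul_apply, ContinuousLinearMap.mulLeftRight_apply, pgB_apply, hRI]
  erw [hcomp]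
  rw [pgB_apply]
  have h5 : (Minv * γ • Pc (π' - π) * Minv) *ᵥ Rc π
      = Minv *ᵥ (γ • (Pc (π' - π) *ᵥ V)) := by
    rw [← Matrix.mulVec_mulVec, ← Matrix.mulVec_mulVec, hVeq, Matrix.smul_mulVec]
  have h6 : ∀ v₁ v₂ : S → ℝ,
      (1 - γ) * ∑ s, ρ s * (Minv *ᵥ v₁) s + (1 - γ) * ∑ s, ρ s * (Minv *ᵥ v₂) s
        = (1 - γ) * ∑ s, ρ s * (Minv *ᵥ (v₁ + v₂)) s := by
    intro v₁ v₂
    rw [Matrix.mulVec_add]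
    simp only [Pi.add_apply, mul_add, Finset.sum_add_distrib]
  rw [h5, h6, hW]
  have h7 : ∀ j, η j * W j = ∑ s, (1 - γ) * (ρ s * (Minv s j * W j)) := by
    intro j
    rw [hηinv j]
    have h8 : (ρ ᵥ* Minv) j = ∑ s, ρ s * Minv s j := rfl
    rw [h8]
    simp only [Finset.sum_mul, Finset.mul_sum]
    exact Finset.sum_congr rfl fun s _ => by ring
  calc (1 - γ) * ∑ s, ρ s * (Minv *ᵥ W) s
      = ∑ s, ∑ j, (1 - γ) * (ρ s * (Minv s j * W j)) := by
        simp only [Matrix.mulVec, dotProduct, Finset.mul_sum]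
    _ = ∑ j, ∑ s, (1 - γ) * (ρ s * (Minv s j * W j)) := Finset.sum_comm
    _ = ∑ j, η j * W j := Finset.sum_congr rfl fun j _ => (h7 j).symm
    _ = ∑ s, ∑ a, η s * Q s a * (π' s a - π s a) := by
        refine Finset.sum_congr rfl fun j _ => ?_
        rw [hWdef, Finset.mul_sum]
        exact Finset.sum_congr rfl fun a _ => by ring
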